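/- Let k be a field of characteristic p > 2, A = k[x]/(x^p), B = k[y]/(y^p). The k-linear map φ: A⊗B → A⊗B defined by φ(x^ℓ ⊗ y^r) = ∑_{t=0}^{r} C(r,t)(t!/2^t) x^{ℓ+t} ⊗ y^{r−t} is bijective, with inverse φ^{-1}(x^ℓ ⊗ y^r) = x^ℓ ⊗ y^r − (r/2) x^{ℓ+1} ⊗ y^{r−1}. -/

import Mathlib

open TensorProduct Polynomial

/-- The truncated polynomial ring `k[X]/(X^p)`. -/
abbrev TruncPoly (k : Type*) [Field k] (p : ℕ) : Type _ :=
  Polynomial k ⧸ Ideal.span {(Polynomial.X : Polynomial k) ^ p}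

/-- The generator of the truncated polynomial ring. -/
noncomputable def tgen (k : Type*) [Field k] (p : ℕ) : TruncPoly k p :=
  Ideal.Quotient.mk _ Polynomial.X

lemma tgen_pow_eq_zero (k : Type*) [Field k] {p m : ℕ} (h : p ≤ m) : tgen k p ^ m = 0 := by
  have h1 : tgen k p ^ m = Ideal.Quotient.mk _ ((X : Polynomial k) ^ m) := by
    rw [tgen, ← map_pow]
  rw [h1, Ideal.Quotient.eq_zero_iff_mem, Ideal.mem_span_singleton]
  exact pow_dvd_pow X h

lemma tgen_span (k : Type*) [Field k] (p : ℕ) (a : TruncPoly k p) :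
    a ∈ Submodule.span k (Set.range fun n => tgen k p ^ n) := by
  obtain ⟨q, rfl⟩ := Ideal.Quotient.mk_surjective a
  induction q using Polynomial.induction_on' with
  | add f g hf hg => rw [map_add]; exact Submodule.add_mem _ hf hg
  | monomial n c =>
      have h1 : (Ideal.Quotient.mk (Ideal.span {(X : Polynomial k) ^ p})) (monomial n c)
          = c • tgen k p ^ n := by
        rw [← Ideal.Quotient.mkₐ_eq_mk k, ← smul_X_eq_monomial, map_smul, map_pow,
          Ideal.Quotient.mkₐ_eq_mk, tgen]
      rw [h1]
      exact Submodule.smul_mem _ _ (Submodule.subset_span ⟨n, rfl⟩)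

/-- Extensionality: a linear endomorphism of `A ⊗ B` fixing all `x^ℓ ⊗ y^r` is the identity. -/
lemma tensor_ext (k : Type*) [Field k] (p : ℕ)
    (f : (TruncPoly k p) ⊗[k] (TruncPoly k p) →ₗ[k] (TruncPoly k p) ⊗[k] (TruncPoly k p))
    (hf : ∀ ℓ r : ℕ, f ((tgen k p ^ ℓ) ⊗ₜ[k] (tgen k p ^ r)) = (tgen k p ^ ℓ) ⊗ₜ[k] (tgen k p ^ r)) :
    f = LinearMap.id := by
  suffices h : ∀ a b : TruncPoly k p, f (a ⊗ₜ[k] b) = a ⊗ₜ[k] b by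
    apply TensorProduct.ext'; intro a b; simpa using h a b
  have step1 : ∀ ℓ : ℕ, ∀ b : TruncPoly k p,
      f ((tgen k p ^ ℓ) ⊗ₜ[k] b) = (tgen k p ^ ℓ) ⊗ₜ[k] b := by
    intro ℓ b
    induction tgen_span k p b using Submodule.span_induction with
    | mem x hx => obtain ⟨r, rfl⟩ := hx; exact hf ℓ r
    | zero => rw [tmul_zero, LinearMap.map_zero]
    | add x y hx hy ihx ihy => rw [tmul_add, map_add, ihx, ihy]
    | smul c x hx ihx => rw [tmul_smul, map_smul, ihx]
  intro a b
  induction tgen_span k p a using Submodule.span_induction with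
  | mem x hx => obtain ⟨ℓ, rfl⟩ := hx; exact step1 ℓ b
  | zero => rw [zero_tmul, LinearMap.map_zero]
  | add x y hx hy ihx ihy => rw [add_tmul, map_add, ihx, ihy]
  | smul c x hx ihx => rw [← smul_tmul', map_smul, ihx]

lemma coeff_id1 (k : Type*) [Field k] (h2 : (2:k) ≠ 0) (r t : ℕ) :
    ((r.choose t : k) * ((t.factorial : k) / 2 ^ t)) * (((r - t : ℕ) : k) / 2)
      = (r.choose (t+1) : k) * (((t+1).factorial : k) / 2 ^ (t+1)) := by
  have key : ((r.choose (t + 1) * (t + 1) : ℕ) : k) = ((r.choose t * (r - t) : ℕ) : k) :=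
    congrArg Nat.cast (Nat.choose_succ_right_eq r t)
  push_cast at key
  rw [Nat.factorial_succ]
  push_cast
  field_simp
  linear_combination (-((t.factorial : k) * 2 ^ t * 2)) * key

lemma coeff_id2 (k : Type*) [Field k] (h2 : (2:k) ≠ 0) (s t : ℕ) :
    (((s : k) + 1) / 2) * ((s.choose t : k) * ((t.factorial : k) / 2 ^ t))
      = ((s + 1).choose (t+1) : k) * (((t+1).factorial : k) / 2 ^ (t+1)) := by
  have key : (((s + 1) * s.choose t : ℕ) : k) = (((s + 1).choose (t + 1) * (t + 1) : ℕ) : k) :=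
    congrArg Nat.cast (Nat.add_one_mul_choose_eq s t)
  push_cast at key
  rw [Nat.factorial_succ]
  push_cast
  field_simp
  linear_combination ((t.factorial : k) * 2 ^ t * 2) * key

set_option maxHeartbeats 1000000 in
/-- The `k`-linear map `φ : A ⊗ B → A ⊗ B` with
`φ(x^ℓ ⊗ y^r) = ∑_t C(r,t)(t!/2^t) x^{ℓ+t} ⊗ y^{r−t}` is bijective, with inverse
`x^ℓ ⊗ y^r ↦ x^ℓ ⊗ y^r − (r/2) x^{ℓ+1} ⊗ y^{r−1}`. -/
theorem stmt15 (k : Type*) [Field k] (p : ℕ) (hp : p.Prime) (hp2 : 2 < p) [CharP k p]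
    (φ ψ : (TruncPoly k p) ⊗[k] (TruncPoly k p) →ₗ[k] (TruncPoly k p) ⊗[k] (TruncPoly k p))
    (hφ : ∀ ℓ r : ℕ, ℓ < p → r < p →
      φ (((tgen k p) ^ ℓ) ⊗ₜ[k] ((tgen k p) ^ r)) =
        ∑ t ∈ Finset.range (r + 1),
          ((r.choose t : k) * ((t.factorial : k) / 2 ^ t)) •
            (((tgen k p) ^ (ℓ + t)) ⊗ₜ[k] ((tgen k p) ^ (r - t))))
    (hψ : ∀ ℓ r : ℕ, ℓ < p → r < p →
      ψ (((tgen k p) ^ ℓ) ⊗ₜ[k] ((tgen k p) ^ r)) =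
        ((tgen k p) ^ ℓ) ⊗ₜ[k] ((tgen k p) ^ r) -
          ((r : k) / 2) • (((tgen k p) ^ (ℓ + 1)) ⊗ₜ[k] ((tgen k p) ^ (r - 1)))) :
    Function.Bijective φ ∧ ψ.comp φ = LinearMap.id ∧ φ.comp ψ = LinearMap.id := by
  have h2 : (2 : k) ≠ 0 := by
    intro hc
    have hc' : ((2 : ℕ) : k) = 0 := by exact_mod_cast hc
    have hd : p ∣ 2 := (CharP.cast_eq_zero_iff k p 2).mp hc'
    exact absurd (Nat.le_of_dvd two_pos hd) (by omega)
  have hztL : ∀ ℓ r : ℕ, p ≤ ℓ →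
      ((tgen k p ^ ℓ) ⊗ₜ[k] (tgen k p ^ r) : (TruncPoly k p) ⊗[k] (TruncPoly k p)) = 0 := by
    intro ℓ r h; rw [tgen_pow_eq_zero k h, zero_tmul]
  have hztR : ∀ ℓ r : ℕ, p ≤ r →
      ((tgen k p ^ ℓ) ⊗ₜ[k] (tgen k p ^ r) : (TruncPoly k p) ⊗[k] (TruncPoly k p)) = 0 := by
    intro ℓ r h; rw [tgen_pow_eq_zero k h, tmul_zero]
  -- the formulas hold with no upper bound on ℓ
  have hψ' : ∀ ℓ r : ℕ, r < p →
      ψ (((tgen k p) ^ ℓ) ⊗ₜ[k] ((tgen k p) ^ r)) =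
        ((tgen k p) ^ ℓ) ⊗ₜ[k] ((tgen k p) ^ r) -
          ((r : k) / 2) • (((tgen k p) ^ (ℓ + 1)) ⊗ₜ[k] ((tgen k p) ^ (r - 1))) := by
    intro ℓ r hr
    by_cases hℓ : ℓ < p
    · exact hψ ℓ r hℓ hr
    · push_neg at hℓ
      rw [hztL ℓ r hℓ, hztL (ℓ + 1) (r - 1) (le_trans hℓ (Nat.le_succ ℓ)),
        LinearMap.map_zero, smul_zero, sub_zero]
  have hφ' : ∀ ℓ r : ℕ, r < p →
      φ (((tgen k p) ^ ℓ) ⊗ₜ[k] ((tgen k p) ^ r)) =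
        ∑ t ∈ Finset.range (r + 1),
          ((r.choose t : k) * ((t.factorial : k) / 2 ^ t)) •
            (((tgen k p) ^ (ℓ + t)) ⊗ₜ[k] ((tgen k p) ^ (r - t))) := by
    intro ℓ r hr
    by_cases hℓ : ℓ < p
    · exact hφ ℓ r hℓ hr
    · push_neg at hℓ
      rw [hztL ℓ r hℓ, LinearMap.map_zero]
      symm
      apply Finset.sum_eq_zero
      intro t _
      rw [hztL (ℓ + t) (r - t) (le_trans hℓ (Nat.le_add_right ℓ t)), smul_zero]
  -- ψ ∘ φ fixes the monomial tensors
  have hψφ : ∀ ℓ r : ℕ, r < p →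
      ψ (φ (((tgen k p) ^ ℓ) ⊗ₜ[k] ((tgen k p) ^ r))) =
        ((tgen k p) ^ ℓ) ⊗ₜ[k] ((tgen k p) ^ r) := by
    intro ℓ r hr
    set F : ℕ → (TruncPoly k p) ⊗[k] (TruncPoly k p) := fun t =>
      ((r.choose t : k) * ((t.factorial : k) / 2 ^ t)) •
        (((tgen k p) ^ (ℓ + t)) ⊗ₜ[k] ((tgen k p) ^ (r - t))) with hF
    rw [hφ' ℓ r hr, map_sum]
    have hterm : ∀ t ∈ Finset.range (r + 1),
        ψ (((r.choose t : k) * ((t.factorial : k) / 2 ^ t)) •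
            (((tgen k p) ^ (ℓ + t)) ⊗ₜ[k] ((tgen k p) ^ (r - t)))) = F t - F (t + 1) := by
      intro t _
      rw [map_smul, hψ' (ℓ + t) (r - t) (lt_of_le_of_lt (Nat.sub_le r t) hr), smul_sub]
      congr 1
      rw [smul_smul]
      have harith1 : ℓ + t + 1 = ℓ + (t + 1) := by omega
      have harith2 : r - t - 1 = r - (t + 1) := by omega
      rw [harith1, harith2, hF, coeff_id1 k h2 r t]
    rw [Finset.sum_congr rfl hterm, Finset.sum_range_sub']
    have hF0 : F 0 = ((tgen k p) ^ ℓ) ⊗ₜ[k] ((tgen k p) ^ r) := by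
      rw [hF]
      simp only [Nat.choose_zero_right, Nat.cast_one, Nat.factorial_zero, pow_zero, div_one,
        one_mul, one_smul, Nat.add_zero, Nat.sub_zero]
    have hFr : F (r + 1) = 0 := by
      rw [hF]
      simp only [Nat.choose_succ_self, Nat.cast_zero, zero_mul, zero_smul]
    rw [hF0, hFr, sub_zero]
  -- φ ∘ ψ fixes the monomial tensors
  have hφψ : ∀ ℓ r : ℕ, r < p →
      φ (ψ (((tgen k p) ^ ℓ) ⊗ₜ[k] ((tgen k p) ^ r))) =
        ((tgen k p) ^ ℓ) ⊗ₜ[k] ((tgen k p) ^ r) := by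
    intro ℓ r hr
    rcases r with _ | s
    · rw [hψ' ℓ 0 hr]
      simp only [Nat.cast_zero, zero_div, zero_smul, sub_zero]
      rw [hφ' ℓ 0 hr, Finset.sum_range_one]
      simp only [Nat.choose_self, Nat.cast_one, Nat.factorial_zero, pow_zero, div_one,
        one_mul, one_smul, Nat.add_zero, Nat.sub_zero]
    · rw [hψ' ℓ (s + 1) hr, LinearMap.map_sub, LinearMap.map_smul, hφ' ℓ (s + 1) hr,
        hφ' (ℓ + 1) (s + 1 - 1) (by omega)]
      simp only [Nat.add_sub_cancel]
      rw [Finset.sum_range_succ', Finset.smul_sum]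
      have hterm : ∀ t ∈ Finset.range (s + 1),
          (((s + 1 : ℕ) : k) / 2) • (((s.choose t : k) * ((t.factorial : k) / 2 ^ t)) •
              (((tgen k p) ^ (ℓ + 1 + t)) ⊗ₜ[k] ((tgen k p) ^ (s - t)))) =
          (((s + 1).choose (t + 1) : k) * (((t + 1).factorial : k) / 2 ^ (t + 1))) •
              (((tgen k p) ^ (ℓ + (t + 1))) ⊗ₜ[k] ((tgen k p) ^ (s + 1 - (t + 1)))) := by
        intro t _
        rw [smul_smul]
        have harith1 : ℓ + 1 + t = ℓ + (t + 1) := by omega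
        have harith2 : s - t = s + 1 - (t + 1) := by omega
        rw [harith1, harith2]
        have hc : (((s + 1 : ℕ) : k) / 2) * ((s.choose t : k) * ((t.factorial : k) / 2 ^ t))
            = ((s + 1).choose (t + 1) : k) * (((t + 1).factorial : k) / 2 ^ (t + 1)) := by
          have := coeff_id2 k h2 s t
          push_cast
          push_cast at this
          exact this
        rw [hc]
      rw [Finset.sum_congr rfl hterm, add_sub_cancel_left]
      simp only [Nat.choose_zero_right, Nat.cast_one, Nat.factorial_zero, pow_zero, div_one,
        one_mul, one_smul, Nat.add_zero, Nat.sub_zero]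
  -- conclude
  have h1 : ψ.comp φ = LinearMap.id := by
    apply tensor_ext
    intro ℓ r
    by_cases hr : r < p
    · rw [LinearMap.comp_apply]; exact hψφ ℓ r hr
    · push_neg at hr
      rw [hztR ℓ r hr, LinearMap.map_zero]
  have h2' : φ.comp ψ = LinearMap.id := by
    apply tensor_ext
    intro ℓ r
    by_cases hr : r < p
    · rw [LinearMap.comp_apply]; exact hφψ ℓ r hr
    · push_neg at hr
      rw [hztR ℓ r hr, LinearMap.map_zero]
  refine ⟨⟨?_, ?_⟩, h1, h2'⟩
  · exact Function.LeftInverse.injective (g := ψ) fun v => by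
      simpa using LinearMap.congr_fun h1 v
  · exact Function.RightInverse.surjective (g := ψ) fun v => by
      simpa using LinearMap.congr_fun h2' v
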